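/- Let R be a commutative ring, and let s₁, s₂, s₃, s₄ be a basis of R⁴ equipped with a bilinear form ⟨·,·⟩ such that the 4×4 Gram matrix (⟨s_i, s_j⟩) has unit determinant and ⟨s_i, s_j⟩ = 0 for all i, j ∈ {1,2}. Then the determinant of the 2×2 matrix with entries ⟨s₁,s₃⟩, ⟨s₂,s₃⟩, ⟨s₁,s₄⟩, ⟨s₂,s₄⟩ is a unit of R. -/

import Mathlib

/-- Let `s₁, …, s₄` be a basis of a free module of rank 4 over a commutative ring `R`,
equipped with a bilinear form whose Gram matrix has unit determinant and such that
`⟨s_i, s_j⟩ = 0` for `i, j ∈ {1, 2}`.  Then the determinant of the 2×2 matrix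
`!![⟨s₁,s₃⟩, ⟨s₂,s₃⟩; ⟨s₁,s₄⟩, ⟨s₂,s₄⟩]` is a unit of `R`. -/
theorem isUnit_offDiagonal_block_of_gram
    {R V : Type*} [CommRing R] [AddCommGroup V] [Module R V]
    (B : V →ₗ[R] V →ₗ[R] R) (s : Module.Basis (Fin 4) R V)
    (hdet : IsUnit (Matrix.det (Matrix.of fun i j : Fin 4 => B (s i) (s j))))
    (hzero : ∀ i j : Fin 4, (i : ℕ) < 2 → (j : ℕ) < 2 → B (s i) (s j) = 0) :
    IsUnit (Matrix.det !![B (s 0) (s 2), B (s 1) (s 2); B (s 0) (s 3), B (s 1) (s 3)]) := by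
  have h00 := hzero 0 0 (by norm_num) (by norm_num)
  have h01 := hzero 0 1 (by norm_num) (by norm_num)
  have h10 := hzero 1 0 (by norm_num) (by norm_num)
  have h11 := hzero 1 1 (by norm_num) (by norm_num)
  have key : (Matrix.det !![B (s 0) (s 2), B (s 1) (s 2); B (s 0) (s 3), B (s 1) (s 3)]) *
      (B (s 2) (s 0) * B (s 3) (s 1) - B (s 2) (s 1) * B (s 3) (s 0)) =
      (Matrix.det (Matrix.of fun i j : Fin 4 => B (s i) (s j))) := by
    simp only [Matrix.det_succ_row_zero, Fin.sum_univ_succ, Matrix.det_fin_two_of,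
      Matrix.submatrix_apply, Matrix.of_apply, Fin.succ_zero_eq_one, Fin.succ_one_eq_two,
      Finset.univ_unique, Fin.default_eq_zero, Finset.sum_singleton, Fin.succAbove,
      Matrix.det_fin_zero, Fin.val_zero, Fin.val_succ]
    norm_num [Fin.lt_def, Fin.castSucc, Fin.castAdd, Fin.castLE, h00, h01, h10, h11]
    simp only [show (Fin.succ 2 : Fin 4) = 3 from rfl, show ((⟨2, by norm_num⟩ : Fin 4)) = 2 from rfl]
    ring
  exact isUnit_of_mul_isUnit_left (key ▸ hdet)
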